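/- Let (A_1,…,A_n) be the attractor of a strongly connected GDIFS S = (G(V,E), (S_e)) in ℝ^d where each S_e is a bi-Lipschitz contraction with l_e‖x−y‖ ≤ ‖S_e(x)−S_e(y)‖ ≤ r_e‖x−y‖, l_e, r_e ∈ (0,1). If S satisfies the strong separation condition and the bounded distortion property, then A_i and A_j are bi-Lipschitz equivalent for every pair i, j ∈ V. -/

import Mathlib

open Set Metric Topology Function

/-- Upper Lipschitz constant `Lip⁺(f) = sup_{x ≠ y} d(f x, f y)/d(x,y)`. -/
noncomputable def lipUpper {P : Type*} [PseudoMetricSpace P] (f : P → P) : ℝ :=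
  sSup {c | ∃ x y : P, x ≠ y ∧ c = dist (f x) (f y) / dist x y}

/-- Lower Lipschitz constant `Lip⁻(f) = inf_{x ≠ y} d(f x, f y)/d(x,y)`. -/
noncomputable def lipLower {P : Type*} [PseudoMetricSpace P] (f : P → P) : ℝ :=
  sInf {c | ∃ x y : P, x ≠ y ∧ c = dist (f x) (f y) / dist x y}

/-- `IsPathFrom src tgt i j p` : the list of edges `p` is a directed path from `i` to `j`. -/
def IsPathFrom {n : ℕ} {E : Type*} (src tgt : E → Fin n) : Fin n → Fin n → List E → Prop
  | i, j, [] => i = j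
  | i, j, e :: p => src e = i ∧ IsPathFrom src tgt (tgt e) j p

/-- The composition `S_{e_1} ∘ ⋯ ∘ S_{e_p}` along a finite path. -/
def pathMap {E P : Type*} (S : E → P → P) : List E → P → P
  | [] => id
  | e :: p => S e ∘ pathMap S p

section Aux

variable {n : ℕ} {E : Type*} {P : Type*} [MetricSpace P]

theorem isPathFrom_nil {src tgt : E → Fin n} {i j : Fin n} :
    IsPathFrom src tgt i j [] ↔ i = j := Iff.rfl

theorem isPathFrom_cons {src tgt : E → Fin n} {i j : Fin n} {e : E} {p : List E} :
    IsPathFrom src tgt i j (e :: p) ↔ src e = i ∧ IsPathFrom src tgt (tgt e) j p := Iff.rfl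

theorem pathMap_nil {S : E → P → P} : pathMap S [] = id := rfl

theorem pathMap_cons {S : E → P → P} (e : E) (p : List E) :
    pathMap S (e :: p) = S e ∘ pathMap S p := rfl

theorem pathMap_append (S : E → P → P) (p q : List E) :
    pathMap S (p ++ q) = pathMap S p ∘ pathMap S q := by
  induction p with
  | nil => rfl
  | cons e p ih => simp [pathMap_cons, ih, Function.comp_assoc]

theorem isPathFrom_append {src tgt : E → Fin n} {i j k : Fin n} {p q : List E}
    (hp : IsPathFrom src tgt i j p) (hq : IsPathFrom src tgt j k q) :
    IsPathFrom src tgt i k (p ++ q) := by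
  induction p generalizing i with
  | nil => rw [isPathFrom_nil] at hp; subst hp; simpa using hq
  | cons e p ih =>
    rw [isPathFrom_cons] at hp
    rw [List.cons_append, isPathFrom_cons]
    exact ⟨hp.1, ih hp.2⟩

/-- gap between a compact set and a disjoint closed set -/
theorem gap_lemma {s t : Set P} (hst : Disjoint s t) (hs : IsCompact s) (ht : IsClosed t) :
    ∃ δ : ℝ, 0 < δ ∧ ∀ u ∈ s, ∀ v ∈ t, δ ≤ dist u v := by
  obtain ⟨δ, hδ, h⟩ := hst.exists_thickenings hs ht
  refine ⟨δ, hδ, fun u hu v hv => ?_⟩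
  by_contra hlt
  push_neg at hlt
  exact (h.ne_of_mem (mem_thickening_iff.2 ⟨u, hu, by rwa [dist_comm] at hlt⟩)
    (self_subset_thickening hδ t hv)) rfl

/-- Bi-Lipschitz equivalence of subsets of `P`. -/
def BLE (X Y : Set P) : Prop :=
  ∃ f : P → P, Set.BijOn f X Y ∧ ∃ c C : ℝ, 0 < c ∧ 0 < C ∧
    ∀ x ∈ X, ∀ y ∈ X, c * dist x y ≤ dist (f x) (f y) ∧ dist (f x) (f y) ≤ C * dist x y

theorem BLE.symm [Nonempty P] {X Y : Set P} (h : BLE X Y) : BLE Y X := by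
  obtain ⟨f, hbij, c, C, hc, hC, hb⟩ := h
  refine ⟨Function.invFunOn f X, hbij.symm hbij.invOn_invFunOn.symm, C⁻¹, c⁻¹,
    by positivity, by positivity, fun y hy y' hy' => ?_⟩
  set x := Function.invFunOn f X y with hxdef
  set x' := Function.invFunOn f X y' with hx'def
  have hx : x ∈ X := hbij.surjOn.mapsTo_invFunOn hy
  have hx' : x' ∈ X := hbij.surjOn.mapsTo_invFunOn hy'
  have hfx : f x = y := hbij.invOn_invFunOn.2 hy
  have hfx' : f x' = y' := hbij.invOn_invFunOn.2 hy'
  have hb1 := (hb x hx x' hx').1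
  have hb2 := (hb x hx x' hx').2
  rw [hfx, hfx'] at hb1 hb2
  constructor
  · rw [inv_mul_le_iff₀ hC]; exact hb2
  · rw [le_inv_mul_iff₀ hc]; exact hb1

theorem BLE.trans {X Y Z : Set P} (h1 : BLE X Y) (h2 : BLE Y Z) : BLE X Z := by
  obtain ⟨f, hf, c1, C1, hc1, hC1, hb1⟩ := h1
  obtain ⟨g, hg, c2, C2, hc2, hC2, hb2⟩ := h2
  refine ⟨g ∘ f, hg.comp hf, c2 * c1, C2 * C1, by positivity, by positivity,
    fun x hx y hy => ?_⟩
  have hfx : f x ∈ Y := hf.mapsTo hx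
  have hfy : f y ∈ Y := hf.mapsTo hy
  have h1 := hb1 x hx y hy
  have h2 := hb2 (f x) hfx (f y) hfy
  constructor
  · calc c2 * c1 * dist x y = c2 * (c1 * dist x y) := by ring
      _ ≤ c2 * dist (f x) (f y) := by nlinarith [h1.1]
      _ ≤ dist (g (f x)) (g (f y)) := h2.1
  · calc dist (g (f x)) (g (f y)) ≤ C2 * dist (f x) (f y) := h2.2
      _ ≤ C2 * (C1 * dist x y) := by nlinarith [h1.2]
      _ = C2 * C1 * dist x y := by ring

end Aux

section GDIFS
variable {n : ℕ} {E : Type} [Fintype E] {P : Type*} [MetricSpace P]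
variable {src tgt : E → Fin n} {S : E → P → P}
variable {l r : E → ℝ} {A : Fin n → Set P}

theorem pathMap_lip (hl : ∀ e, 0 < l e) (hr : ∀ e, 0 < r e)
    (hS : ∀ e, ∀ x y : P, l e * dist x y ≤ dist (S e x) (S e y) ∧
      dist (S e x) (S e y) ≤ r e * dist x y) (p : List E) (x y : P) :
    (p.map l).prod * dist x y ≤ dist (pathMap S p x) (pathMap S p y) ∧
      dist (pathMap S p x) (pathMap S p y) ≤ (p.map r).prod * dist x y := by
  induction p with
  | nil => simp [pathMap]
  | cons e p ih =>
    have h1 := hS e (pathMap S p x) (pathMap S p y)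
    have hrpos : 0 < r e := hr e
    constructor
    · calc ((e :: p).map l).prod * dist x y = l e * ((p.map l).prod * dist x y) := by
            simp [List.prod_cons]; ring
        _ ≤ l e * dist (pathMap S p x) (pathMap S p y) := by nlinarith [ih.1, hl e]
        _ ≤ dist (pathMap S (e :: p) x) (pathMap S (e :: p) y) := h1.1
    · calc dist (pathMap S (e :: p) x) (pathMap S (e :: p) y)
          ≤ r e * dist (pathMap S p x) (pathMap S p y) := h1.2
        _ ≤ r e * ((p.map r).prod * dist x y) := by nlinarith [ih.2, hrpos]
        _ = ((e :: p).map r).prod * dist x y := by simp [List.prod_cons]; ring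

theorem prodl_pos (hl : ∀ e, 0 < l e) (p : List E) : 0 < (p.map l).prod := by
  apply List.prod_pos; intro a ha
  obtain ⟨e, _, rfl⟩ := List.mem_map.1 ha
  exact hl e

theorem pathMap_injective (hl : ∀ e, 0 < l e) (hr : ∀ e, 0 < r e)
    (hS : ∀ e, ∀ x y : P, l e * dist x y ≤ dist (S e x) (S e y) ∧
      dist (S e x) (S e y) ≤ r e * dist x y) (p : List E) :
    Function.Injective (pathMap S p) := by
  intro x y hxy
  have h := (pathMap_lip hl hr hS p x y).1
  rw [hxy, dist_self] at h
  have := prodl_pos hl (l := l) p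
  have : dist x y ≤ 0 := by nlinarith [dist_nonneg (x := x) (y := y)]
  exact dist_le_zero.1 this

theorem pathMap_lipschitzWith (hl : ∀ e, 0 < l e) (hr : ∀ e, 0 < r e)
    (hS : ∀ e, ∀ x y : P, l e * dist x y ≤ dist (S e x) (S e y) ∧
      dist (S e x) (S e y) ≤ r e * dist x y) (p : List E) :
    LipschitzWith (Real.toNNReal ((p.map r).prod)) (pathMap S p) := by
  apply LipschitzWith.of_dist_le_mul
  intro x y
  have := (pathMap_lip hl hr hS p x y).2
  rwa [Real.coe_toNNReal _ (le_of_lt (prodl_pos hr p))]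

theorem pathMap_mapsTo (hattr : ∀ i, A i = ⋃ (e : E) (_ : src e = i), S e '' A (tgt e))
    {i j : Fin n} {p : List E} (hp : IsPathFrom src tgt i j p) :
    pathMap S p '' A j ⊆ A i := by
  induction p generalizing i with
  | nil => rw [isPathFrom_nil] at hp; subst hp; simp [pathMap]
  | cons e p ih =>
    rw [isPathFrom_cons] at hp
    have h1 : pathMap S (e :: p) '' A j = S e '' (pathMap S p '' A j) := by
      rw [pathMap]; exact (Set.image_comp _ _ _)
    rw [h1]
    have h2 : S e '' (pathMap S p '' A j) ⊆ S e '' A (tgt e) :=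
      Set.image_mono (ih hp.2)
    intro z hz
    rw [hattr i]
    exact Set.mem_iUnion.2 ⟨e, Set.mem_iUnion.2 ⟨hp.1, h2 hz⟩⟩


/-- Every point of `A i` lies in some cylinder of each depth. -/
theorem exists_cylinder (hattr : ∀ i, A i = ⋃ (e : E) (_ : src e = i), S e '' A (tgt e))
    (m : ℕ) : ∀ i : Fin n, ∀ x ∈ A i, ∃ (p : List E) (j : Fin n),
      p.length = m ∧ IsPathFrom src tgt i j p ∧ x ∈ pathMap S p '' A j := by
  induction m with
  | zero => intro i x hx; exact ⟨[], i, rfl, rfl, by simpa [pathMap] using hx⟩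
  | succ m ih =>
    intro i x hx
    rw [hattr i] at hx
    obtain ⟨e, he⟩ := Set.mem_iUnion.1 hx
    obtain ⟨hei, hx2⟩ := Set.mem_iUnion.1 he
    obtain ⟨y, hy, rfl⟩ := hx2
    obtain ⟨p, j, hlen, hpath, hy2⟩ := ih (tgt e) y hy
    refine ⟨e :: p, j, by simp [hlen], isPathFrom_cons.2 ⟨hei, hpath⟩, ?_⟩
    obtain ⟨z, hz, rfl⟩ := hy2
    exact ⟨z, hz, rfl⟩

/-- Distinct equal-length cylinders from the same vertex are disjoint. -/
theorem cylinders_disjoint (hl : ∀ e, 0 < l e) (hr : ∀ e, 0 < r e)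
    (hS : ∀ e, ∀ x y : P, l e * dist x y ≤ dist (S e x) (S e y) ∧
      dist (S e x) (S e y) ≤ r e * dist x y)
    (hattr : ∀ i, A i = ⋃ (e : E) (_ : src e = i), S e '' A (tgt e))
    (hssc : ∀ e e' : E, src e = src e' → e ≠ e' →
      Disjoint (S e '' A (tgt e)) (S e' '' A (tgt e')))
    {p q : List E} (hlen : p.length = q.length) (hne : p ≠ q) :
    ∀ {i j j' : Fin n}, IsPathFrom src tgt i j p → IsPathFrom src tgt i j' q →
      Disjoint (pathMap S p '' A j) (pathMap S q '' A j') := by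
  induction p generalizing q with
  | nil =>
    intro i j j' _ _
    exact absurd (List.length_eq_zero_iff.1 hlen.symm).symm hne
  | cons e p ih =>
    intro i j j' hp hq
    match q, hlen with
    | e' :: q, hlen =>
      rw [isPathFrom_cons] at hp hq
      have himg : pathMap S (e :: p) '' A j = S e '' (pathMap S p '' A j) :=
        Set.image_comp _ _ _
      have himg' : pathMap S (e' :: q) '' A j' = S e' '' (pathMap S q '' A j') :=
        Set.image_comp _ _ _
      rw [himg, himg']
      by_cases hee : e = e'
      · subst hee
        have hpq : p ≠ q := by intro h; exact hne (by rw [h])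
        have hdisj := ih (by simpa using hlen) hpq hp.2 hq.2
        have hinj : Function.Injective (S e) := fun a b hab =>
          (pathMap_injective (S := S) hl hr hS [e]) (by simpa [pathMap] using hab)
        exact Set.disjoint_image_of_injective hinj hdisj
      · have := hssc e e' (hp.1.trans hq.1.symm) hee
        exact Set.disjoint_of_subset
          (Set.image_mono (pathMap_mapsTo hattr hp.2))
          (Set.image_mono (pathMap_mapsTo hattr hq.2)) this

/-- Complement of a cylinder inside `A i` is compact and disjoint from it. -/
theorem cylinder_complement (hl : ∀ e, 0 < l e) (hr : ∀ e, 0 < r e)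
    (hS : ∀ e, ∀ x y : P, l e * dist x y ≤ dist (S e x) (S e y) ∧
      dist (S e x) (S e y) ≤ r e * dist x y)
    (hAcp : ∀ i, IsCompact (A i))
    (hattr : ∀ i, A i = ⋃ (e : E) (_ : src e = i), S e '' A (tgt e))
    (hssc : ∀ e e' : E, src e = src e' → e ≠ e' →
      Disjoint (S e '' A (tgt e)) (S e' '' A (tgt e')))
    {p : List E} : ∀ {i j : Fin n}, IsPathFrom src tgt i j p →
    ∃ R : Set P, IsCompact R ∧ (pathMap S p '' A j) ∪ R = A i ∧
      Disjoint (pathMap S p '' A j) R := by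
  induction p with
  | nil =>
    intro i j hp
    rw [isPathFrom_nil] at hp; subst hp
    exact ⟨∅, isCompact_empty, by simp [pathMap], by simp⟩
  | cons e p ih =>
    intro i j hp
    rw [isPathFrom_cons] at hp
    obtain ⟨R', hR'cp, hR'eq, hR'disj⟩ := ih hp.2
    have hScont : Continuous (S e) := by
      have := pathMap_lipschitzWith hl hr (S := S) hS [e]
      simpa [pathMap] using this.continuous
    refine ⟨S e '' R' ∪ ⋃ e' ∈ {e' : E | src e' = i ∧ e' ≠ e}, S e' '' A (tgt e'), ?_, ?_, ?_⟩
    · refine (hR'cp.image hScont).union ?_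
      apply Set.Finite.isCompact_biUnion (Set.toFinite _)
      intro e' _
      have : Continuous (S e') := by
        have := pathMap_lipschitzWith hl hr (S := S) hS [e']
        simpa [pathMap] using this.continuous
      exact (hAcp (tgt e')).image this
    · have h1 : pathMap S (e :: p) '' A j = S e '' (pathMap S p '' A j) :=
        Set.image_comp _ _ _
      rw [h1, hattr i]
      rw [← Set.union_assoc, ← Set.image_union, hR'eq]
      ext z
      simp only [Set.mem_union, Set.mem_iUnion, Set.mem_setOf_eq]
      constructor
      · rintro (hz | ⟨e', ⟨he', _⟩, hz⟩)
        · exact ⟨e, hp.1, hz⟩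
        · exact ⟨e', he', hz⟩
      · rintro ⟨e', he', hz⟩
        by_cases hee : e' = e
        · subst hee; left; exact hz
        · right; exact ⟨e', ⟨he', hee⟩, hz⟩
    · have h1 : pathMap S (e :: p) '' A j = S e '' (pathMap S p '' A j) :=
        Set.image_comp _ _ _
      rw [h1]
      apply Set.disjoint_union_right.2
      constructor
      · exact Set.disjoint_image_of_injective
          (fun a b hab => (pathMap_injective (S := S) hl hr hS [e]) (by simpa [pathMap] using hab))
          hR'disj
      · apply Set.disjoint_iUnion_right.2
        intro e'
        apply Set.disjoint_iUnion_right.2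
        rintro ⟨he', hee⟩
        exact Set.disjoint_of_subset (Set.image_mono (pathMap_mapsTo hattr hp.2))
          le_rfl (hssc e e' (by rw [hp.1, he']) (fun h => hee h.symm))


/-- From BDP: every path map is a quasi-similarity. -/
theorem bdp_sandwich (htwo : ∃ u v : P, u ≠ v) (hl : ∀ e, 0 < l e) (hr : ∀ e, 0 < r e)
    (hS : ∀ e, ∀ x y : P, l e * dist x y ≤ dist (S e x) (S e y) ∧
      dist (S e x) (S e y) ≤ r e * dist x y)
    {K : ℝ} (w : List E)
    (hKw : lipUpper (pathMap S w) ≤ K * lipLower (pathMap S w)) :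
    ∃ ρ : ℝ, 0 < ρ ∧ ∀ x y : P, ρ * dist x y ≤ dist (pathMap S w x) (pathMap S w y) ∧
      dist (pathMap S w x) (pathMap S w y) ≤ K * ρ * dist x y := by
  set f := pathMap S w with hf
  set T := {c | ∃ x y : P, x ≠ y ∧ c = dist (f x) (f y) / dist x y} with hT
  obtain ⟨u, v, huv⟩ := htwo
  have hTne : T.Nonempty := ⟨_, u, v, huv, rfl⟩
  have hL : ∀ t ∈ T, (w.map l).prod ≤ t := by
    rintro t ⟨x, y, hxy, rfl⟩
    have hd : 0 < dist x y := dist_pos.2 hxy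
    rw [le_div_iff₀ hd]
    exact (pathMap_lip hl hr hS w x y).1
  have hR : ∀ t ∈ T, t ≤ (w.map r).prod := by
    rintro t ⟨x, y, hxy, rfl⟩
    have hd : 0 < dist x y := dist_pos.2 hxy
    rw [div_le_iff₀ hd]
    exact (pathMap_lip hl hr hS w x y).2
  have hbb : BddBelow T := ⟨_, hL⟩
  have hba : BddAbove T := ⟨_, hR⟩
  have hinf : (w.map l).prod ≤ sInf T := le_csInf hTne hL
  have hρpos : 0 < sInf T := lt_of_lt_of_le (prodl_pos hl w) hinf
  refine ⟨sInf T, hρpos, fun x y => ?_⟩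
  rcases eq_or_ne x y with rfl | hxy
  · simp [mul_nonneg, le_of_lt hρpos]
  · have hd : 0 < dist x y := dist_pos.2 hxy
    have hmem : dist (f x) (f y) / dist x y ∈ T := ⟨x, y, hxy, rfl⟩
    constructor
    · have h1 : sInf T ≤ dist (f x) (f y) / dist x y := csInf_le hbb hmem
      rw [le_div_iff₀ hd] at h1
      exact h1
    · have h2 : dist (f x) (f y) / dist x y ≤ sSup T := le_csSup hba hmem
      have h3 : sSup T ≤ K * sInf T := hKw
      rw [div_le_iff₀ hd] at h2
      calc dist (f x) (f y) ≤ sSup T * dist x y := h2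
        _ ≤ K * sInf T * dist x y := by nlinarith
  

theorem K_ge_one (htwo : ∃ u v : P, u ≠ v) (hl : ∀ e, 0 < l e) (hr : ∀ e, 0 < r e)
    (hS : ∀ e, ∀ x y : P, l e * dist x y ≤ dist (S e x) (S e y) ∧
      dist (S e x) (S e y) ≤ r e * dist x y)
    {K : ℝ} (w : List E)
    (hKw : lipUpper (pathMap S w) ≤ K * lipLower (pathMap S w)) : 1 ≤ K := by
  obtain ⟨ρ, hρ, hsand⟩ := bdp_sandwich htwo hl hr hS w hKw
  obtain ⟨u, v, huv⟩ := htwo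
  have hd : 0 < dist u v := dist_pos.2 huv
  have h1 := (hsand u v).1
  have h2 := (hsand u v).2
  have hfd : ρ * dist u v ≤ K * ρ * dist u v := le_trans h1 h2
  nlinarith [mul_pos hρ hd]

/-- Gluing two bi-Lipschitz equivalences along separated pieces. -/
theorem BLE_glue {X1 X2 Y1 Y2 : Set P}
    (hX1 : IsCompact X1) (hX2 : IsCompact X2) (hY1 : IsCompact Y1) (hY2 : IsCompact Y2)
    (hXd : Disjoint X1 X2) (hYd : Disjoint Y1 Y2)
    (h1 : BLE X1 Y1) (h2 : BLE X2 Y2) : BLE (X1 ∪ X2) (Y1 ∪ Y2) := by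
  classical
  obtain ⟨f1, hf1, c1, C1, hc1, hC1, hb1⟩ := h1
  obtain ⟨f2, hf2, c2, C2, hc2, hC2, hb2⟩ := h2
  obtain ⟨δX, hδX, hgapX⟩ := gap_lemma hXd hX1 hX2.isClosed
  obtain ⟨δY, hδY, hgapY⟩ := gap_lemma hYd hY1 hY2.isClosed
  obtain ⟨DX', hDX'⟩ := Metric.isBounded_iff.1 (hX1.union hX2).isBounded
  obtain ⟨DY', hDY'⟩ := Metric.isBounded_iff.1 (hY1.union hY2).isBounded
  set DX := max DX' 1 with hDXdef
  set DY := max DY' 1 with hDYdef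
  have hDX : 0 < DX := lt_of_lt_of_le one_pos (le_max_right _ _)
  have hDY : 0 < DY := lt_of_lt_of_le one_pos (le_max_right _ _)
  have hDXb : ∀ x ∈ X1 ∪ X2, ∀ y ∈ X1 ∪ X2, dist x y ≤ DX :=
    fun x hx y hy => le_trans (hDX' hx hy) (le_max_left _ _)
  have hDYb : ∀ x ∈ Y1 ∪ Y2, ∀ y ∈ Y1 ∪ Y2, dist x y ≤ DY :=
    fun x hx y hy => le_trans (hDY' hx hy) (le_max_left _ _)
  set f : P → P := fun x => if x ∈ X1 then f1 x else f2 x with hfdef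
  have hfX1 : ∀ x ∈ X1, f x = f1 x := fun x hx => if_pos hx
  have hfX2 : ∀ x ∈ X2, f x = f2 x := fun x hx => if_neg (fun h => hXd.ne_of_mem h hx rfl)
  set c := min (min c1 c2) (δY / DX) with hcdef
  set C := max (max C1 C2) (DY / δX) with hCdef
  have hc : 0 < c := lt_min (lt_min hc1 hc2) (by positivity)
  have hC : 0 < C := lt_of_lt_of_le hC1 (le_trans (le_max_left _ _) (le_max_left _ _))
  -- the cross bound, stated symmetrically
  have cross : ∀ x ∈ X1, ∀ y ∈ X2,
      c * dist x y ≤ dist (f1 x) (f2 y) ∧ dist (f1 x) (f2 y) ≤ C * dist x y := by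
    intro x hx y hy
    have hfx : f1 x ∈ Y1 := hf1.mapsTo hx
    have hfy : f2 y ∈ Y2 := hf2.mapsTo hy
    have hd1 : δX ≤ dist x y := hgapX x hx y hy
    have hd2 : dist x y ≤ DX := hDXb x (Or.inl hx) y (Or.inr hy)
    have hd3 : δY ≤ dist (f1 x) (f2 y) := hgapY _ hfx _ hfy
    have hd4 : dist (f1 x) (f2 y) ≤ DY := hDYb _ (Or.inl hfx) _ (Or.inr hfy)
    constructor
    · calc c * dist x y ≤ (δY / DX) * DX := by
            have : c ≤ δY / DX := min_le_right _ _
            have h0 : (0:ℝ) ≤ dist x y := dist_nonneg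
            nlinarith
        _ = δY := by field_simp
        _ ≤ dist (f1 x) (f2 y) := hd3
    · calc dist (f1 x) (f2 y) ≤ DY := hd4
        _ = (DY / δX) * δX := by field_simp
        _ ≤ (DY / δX) * dist x y := by
            have : 0 ≤ DY / δX := by positivity
            nlinarith
        _ ≤ C * dist x y := by
            have : DY / δX ≤ C := le_max_right _ _
            nlinarith [dist_nonneg (x := x) (y := y)]
  refine ⟨f, ⟨?_, ?_, ?_⟩, c, C, hc, hC, ?_⟩
  · -- MapsTo
    rintro x (hx | hx)
    · rw [hfX1 x hx]; exact Or.inl (hf1.mapsTo hx)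
    · rw [hfX2 x hx]; exact Or.inr (hf2.mapsTo hx)
  · -- InjOn
    rintro x (hx | hx) y (hy | hy) hxy
    · exact hf1.injOn hx hy (by rwa [hfX1 x hx, hfX1 y hy] at hxy)
    · rw [hfX1 x hx, hfX2 y hy] at hxy
      exact absurd rfl (hYd.ne_of_mem (hxy ▸ hf1.mapsTo hx) (hf2.mapsTo hy))
    · rw [hfX2 x hx, hfX1 y hy] at hxy
      exact absurd rfl (hYd.ne_of_mem (hf1.mapsTo hy) (hxy ▸ hf2.mapsTo hx))
    · exact hf2.injOn hx hy (by rwa [hfX2 x hx, hfX2 y hy] at hxy)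
  · -- SurjOn
    rintro y (hy | hy)
    · obtain ⟨x, hx, rfl⟩ := hf1.surjOn hy
      exact ⟨x, Or.inl hx, hfX1 x hx⟩
    · obtain ⟨x, hx, rfl⟩ := hf2.surjOn hy
      exact ⟨x, Or.inr hx, hfX2 x hx⟩
  · -- bounds
    rintro x (hx | hx) y (hy | hy)
    · rw [hfX1 x hx, hfX1 y hy]
      obtain ⟨hb, hb'⟩ := hb1 x hx y hy
      have hcc : c ≤ c1 := le_trans (min_le_left _ _) (min_le_left _ _)
      have hCC : C1 ≤ C := le_trans (le_max_left _ _) (le_max_left _ _)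
      have hdn : (0:ℝ) ≤ dist x y := dist_nonneg
      constructor
      · nlinarith
      · nlinarith
    · rw [hfX1 x hx, hfX2 y hy]; exact cross x hx y hy
    · rw [hfX2 x hx, hfX1 y hy]
      have h := cross y hy x hx
      rw [dist_comm x y, dist_comm (f2 x) (f1 y)]
      exact h
    · rw [hfX2 x hx, hfX2 y hy]
      obtain ⟨hb, hb'⟩ := hb2 x hx y hy
      have hcc : c ≤ c2 := le_trans (min_le_left _ _) (min_le_right _ _)
      have hCC : C2 ≤ C := le_trans (le_max_right _ _) (le_max_left _ _)
      have hdn : (0:ℝ) ≤ dist x y := dist_nonneg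
      constructor
      · nlinarith
      · nlinarith


theorem absorb
    (hl : ∀ e, 0 < l e) (hr : ∀ e, 0 < r e)
    (hS : ∀ e, ∀ x y : P, l e * dist x y ≤ dist (S e x) (S e y) ∧
      dist (S e x) (S e y) ≤ r e * dist x y)
    (hAcp : ∀ i, IsCompact (A i))
    (hattr : ∀ i, A i = ⋃ (e : E) (_ : src e = i), S e '' A (tgt e))
    (hssc : ∀ e e' : E, src e = src e' → e ≠ e' →
      Disjoint (S e '' A (tgt e)) (S e' '' A (tgt e')))
    (htwo : ∃ u v : P, u ≠ v)
    {K : ℝ}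
    (hBDP : ∀ w : List E, w ≠ [] → (∃ i j, IsPathFrom src tgt i j w) →
      lipUpper (pathMap S w) ≤ K * lipLower (pathMap S w))
    {i k : Fin n} {a b : List E}
    (ha : IsPathFrom src tgt i i a) (ha0 : a ≠ [])
    (hb : IsPathFrom src tgt i k b)
    (hdisj : Disjoint (pathMap S a '' A i) (pathMap S b '' A k)) :
    BLE ((A i : Set P)) ((pathMap S a '' A i) ∪ (pathMap S b '' A k)) := by
  classical
  set g : P → P := pathMap S a with hgdef
  set Pset : Set P := g '' A i with hPdef
  set Q : Set P := pathMap S b '' A k with hQdef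
  have hgc : Continuous g := (pathMap_lipschitzWith hl hr hS a).continuous
  have hginj : Function.Injective g := pathMap_injective hl hr hS a
  have hPsub : Pset ⊆ A i := pathMap_mapsTo hattr ha
  have hQsub : Q ⊆ A i := pathMap_mapsTo hattr hb
  have hgmem : ∀ x ∈ A i, g x ∈ A i := fun x hx => hPsub ⟨x, hx, rfl⟩
  have hitmem : ∀ m : ℕ, ∀ x ∈ A i, g^[m] x ∈ A i := by
    intro m
    induction m with
    | zero => intro x hx; simpa using hx
    | succ m ih =>
      intro x hx
      rw [Function.iterate_succ_apply']
      exact hgmem _ (ih x hx)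
  have hitP : ∀ m : ℕ, ∀ x ∈ A i, g^[m + 1] x ∈ Pset := by
    intro m x hx
    rw [Function.iterate_succ_apply']
    exact ⟨g^[m] x, hitmem m x hx, rfl⟩
  -- paths representing iterates of g
  have hpow : ∀ s : ℕ, ∃ w : List E, IsPathFrom src tgt i i w ∧ pathMap S w = g^[s] ∧
      (s ≠ 0 → w ≠ []) := by
    intro s
    induction s with
    | zero => exact ⟨[], rfl, by simp [pathMap], fun h => absurd rfl h⟩
    | succ s ih =>
      obtain ⟨w, hw1, hw2, _⟩ := ih
      refine ⟨a ++ w, isPathFrom_append ha hw1, ?_, fun _ h => ?_⟩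
      · rw [pathMap_append, hw2, ← hgdef, Function.iterate_succ']
      · rcases List.append_eq_nil_iff.1 h with ⟨h1, _⟩; exact ha0 h1
  have hK1 : 1 ≤ K := K_ge_one htwo hl hr hS a (hBDP a ha0 ⟨i, i, ha⟩)
  have hK : (0:ℝ) < K := lt_of_lt_of_le one_pos hK1
  have hsand : ∀ s : ℕ, ∃ ρ : ℝ, 0 < ρ ∧ ∀ x y : P,
      ρ * dist x y ≤ dist (g^[s] x) (g^[s] y) ∧
      dist (g^[s] x) (g^[s] y) ≤ K * ρ * dist x y := by
    intro s
    rcases Nat.eq_zero_or_pos s with rfl | hs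
    · refine ⟨1, one_pos, fun x y => ?_⟩
      simp only [Function.iterate_zero, id_eq]
      constructor
      · rw [one_mul]
      · rw [mul_one]
        exact le_mul_of_one_le_left dist_nonneg hK1
    · obtain ⟨w, hw1, hw2, hw3⟩ := hpow s
      obtain ⟨ρ, hρ, hss⟩ := bdp_sandwich htwo hl hr hS w (hBDP w (hw3 hs.ne') ⟨i, i, hw1⟩)
      refine ⟨ρ, hρ, fun x y => ?_⟩
      rw [← hw2]
      exact hss x y
  -- bi-Lipschitz constants of g itself
  set La : ℝ := (a.map l).prod with hLadef
  set Ra : ℝ := (a.map r).prod with hRadef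
  have hLa : 0 < La := prodl_pos hl a
  have hRa : 0 < Ra := prodl_pos hr a
  have hga : ∀ x y : P, La * dist x y ≤ dist (g x) (g y) ∧
      dist (g x) (g y) ≤ Ra * dist x y := fun x y => pathMap_lip hl hr hS a x y
  -- gaps
  obtain ⟨RP, hRPc, hRPeq, hRPd⟩ := cylinder_complement hl hr hS hAcp hattr hssc ha
  obtain ⟨RQ, hRQc, hRQeq, hRQd⟩ := cylinder_complement hl hr hS hAcp hattr hssc hb
  have hPc : IsCompact Pset := (hAcp i).image hgc
  have hQc : IsCompact Q := (hAcp k).image (pathMap_lipschitzWith hl hr hS b).continuous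
  obtain ⟨δ1, hδ1, hgap1⟩ := gap_lemma hRPd hPc hRPc.isClosed
  obtain ⟨δ2, hδ2, hgap2⟩ := gap_lemma hRQd hQc hRQc.isClosed
  obtain ⟨δ3, hδ3, hgap3⟩ := gap_lemma hdisj hPc hQc.isClosed
  have hgapP : ∀ u ∈ Pset, ∀ v ∈ A i, v ∉ Pset → δ1 ≤ dist u v := by
    intro u hu v hv hvn
    rcases (by rw [hRPeq]; exact hv : v ∈ Pset ∪ RP) with h | h
    · exact absurd h hvn
    · exact hgap1 u hu v h
  have hgapQ : ∀ u ∈ Q, ∀ v ∈ A i, v ∉ Q → δ2 ≤ dist u v := by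
    intro u hu v hv hvn
    rcases (by rw [hRQeq]; exact hv : v ∈ Q ∪ RQ) with h | h
    · exact absurd h hvn
    · exact hgap2 u hu v h
  set δm : ℝ := min δ1 δ2 with hδmdef
  have hδm : 0 < δm := lt_min hδ1 hδ2
  -- diameter bound
  obtain ⟨B', hB'⟩ := Metric.isBounded_iff.1 (hAcp i).isBounded
  set B : ℝ := max B' 1 with hBdef
  have hB : (0:ℝ) < B := lt_of_lt_of_le one_pos (le_max_right _ _)
  have hBb : ∀ u ∈ A i, ∀ v ∈ A i, dist u v ≤ B :=
    fun u hu v hv => le_trans (hB' hu hv) (le_max_left _ _)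
  -- the union of forward iterates of Q
  set W : Set P := ⋃ m : ℕ, g^[m] '' Q with hWdef
  have hWmem : ∀ (m : ℕ) (q : P), q ∈ Q → g^[m] q ∈ W :=
    fun m q hq => Set.mem_iUnion.2 ⟨m, q, hq, rfl⟩
  have hWrep : ∀ x ∈ W, ∃ (m : ℕ) (q : P), q ∈ Q ∧ g^[m] q = x := by
    intro x hx
    obtain ⟨m, q, hq, rfl⟩ := Set.mem_iUnion.1 hx
    exact ⟨m, q, hq, rfl⟩
  have hQW : Q ⊆ W := fun q hq => by
    have := hWmem 0 q hq; simpa using this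
  have hWsub : W ⊆ A i := by
    intro x hx
    obtain ⟨m, q, hq, rfl⟩ := hWrep x hx
    exact hitmem m q (hQsub hq)
  have hWPQ : ∀ x ∈ W, x ∈ Pset ∪ Q := by
    intro x hx
    obtain ⟨m, q, hq, rfl⟩ := hWrep x hx
    cases m with
    | zero => right; simpa using hq
    | succ m => left; exact hitP m q (hQsub hq)
  -- constants
  set c : ℝ := min (min 1 La) (min (La * δm / (K * B)) (δ3 / (K * B))) with hcdef
  set C : ℝ := max (max 1 Ra) (max (K * B / δm) (K * B / δ2)) with hCdef
  have hc : 0 < c := lt_min (lt_min one_pos hLa) (lt_min (by positivity) (by positivity))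
  have hC : 0 < C := lt_of_lt_of_le one_pos (le_trans (le_max_left _ _) (le_max_left _ _))
  have hc1 : c ≤ 1 := le_trans (min_le_left _ _) (min_le_left _ _)
  have hcLa : c ≤ La := le_trans (min_le_left _ _) (min_le_right _ _)
  have hc2 : c ≤ La * δm / (K * B) := le_trans (min_le_right _ _) (min_le_left _ _)
  have hc3 : c ≤ δ3 / (K * B) := le_trans (min_le_right _ _) (min_le_right _ _)
  have hC1 : 1 ≤ C := le_trans (le_max_left _ _) (le_max_left _ _)
  have hCRa : Ra ≤ C := le_trans (le_max_right _ _) (le_max_left _ _)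
  have hC2 : K * B / δm ≤ C := le_trans (le_max_left _ _) (le_max_right _ _)
  have hC3 : K * B / δ2 ≤ C := le_trans (le_max_right _ _) (le_max_right _ _)
  -- the key cross estimate
  have key : ∀ x ∈ A i, ∀ y ∈ A i, x ∈ W → y ∉ W →
      c * dist x y ≤ dist x (g y) ∧ dist x (g y) ≤ C * dist x y := by
    intro x hx y hy hxW hyW
    obtain ⟨m, q, hq, rfl⟩ := hWrep x hxW
    have hqA : q ∈ A i := hQsub hq
    by_cases hyP : y ∈ g^[m] '' (A i)
    · -- y has depth at least m : pull back to level m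
      obtain ⟨w, hwA, rfl⟩ := hyP
      have hwQ : w ∉ Q := fun h => hyW (hWmem m w h)
      obtain ⟨ρ, hρ, hss⟩ := hsand m
      have h1 := hss q w
      have hcomm : g (g^[m] w) = g^[m] (g w) := by
        rw [← Function.iterate_succ_apply' g m w, Function.iterate_succ_apply g m w]
      rw [hcomm]
      have h2 := hss q (g w)
      have hd1 : δ2 ≤ dist q w := hgapQ q hq w hwA hwQ
      have hd2 : dist q w ≤ B := hBb q hqA w hwA
      have hd3 : δ3 ≤ dist q (g w) := by
        rw [dist_comm]
        exact hgap3 (g w) ⟨w, hwA, rfl⟩ q hq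
      have hd4 : dist q (g w) ≤ B := hBb q hqA (g w) (hgmem w hwA)
      constructor
      · have hub : dist (g^[m] q) (g^[m] w) ≤ K * ρ * B :=
          le_trans h1.2 (mul_le_mul_of_nonneg_left hd2 (by positivity))
        calc c * dist (g^[m] q) (g^[m] w) ≤ (δ3 / (K * B)) * (K * ρ * B) :=
              mul_le_mul hc3 hub dist_nonneg (by positivity)
          _ = ρ * δ3 := by field_simp
          _ ≤ ρ * dist q (g w) := mul_le_mul_of_nonneg_left hd3 hρ.le
          _ ≤ dist (g^[m] q) (g^[m] (g w)) := h2.1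
      · calc dist (g^[m] q) (g^[m] (g w)) ≤ K * ρ * dist q (g w) := h2.2
          _ ≤ K * ρ * B := mul_le_mul_of_nonneg_left hd4 (by positivity)
          _ = (K * B / δ2) * (ρ * δ2) := by field_simp
          _ ≤ (K * B / δ2) * dist (g^[m] q) (g^[m] w) := by
              have h5 : ρ * δ2 ≤ dist (g^[m] q) (g^[m] w) :=
                le_trans (mul_le_mul_of_nonneg_left hd1 hρ.le) h1.1
              exact mul_le_mul_of_nonneg_left h5 (by positivity)
          _ ≤ C * dist (g^[m] q) (g^[m] w) :=
              mul_le_mul_of_nonneg_right hC3 dist_nonneg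
    · -- y has depth s < m
      have hex : ∃ t : ℕ, y ∉ g^[t] '' (A i) := ⟨m, hyP⟩
      have ht0 := Nat.find_spec hex
      have ht0ne : Nat.find hex ≠ 0 := by
        intro h
        apply ht0
        rw [h]
        simpa using hy
      obtain ⟨s, hst⟩ : ∃ s, Nat.find hex = s + 1 := ⟨Nat.find hex - 1,
        (Nat.succ_pred_eq_of_ne_zero ht0ne).symm⟩
      have hys : y ∈ g^[s] '' (A i) := by
        by_contra h
        have h2 : Nat.find hex ≤ s := Nat.find_le h
        omega
      obtain ⟨yb, hybA, rfl⟩ := hys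
      have hybP : yb ∉ Pset := by
        rintro ⟨z, hz, rfl⟩
        apply ht0
        rw [hst]
        exact ⟨z, hz, by rw [Function.iterate_succ_apply]⟩
      have hybQ : yb ∉ Q := fun h => hyW (hWmem s yb h)
      have hsm : s + 1 ≤ m := by
        have : Nat.find hex ≤ m := Nat.find_le hyP
        omega
      -- express x at level s
      have hxlev : g^[m] q = g^[s] (g^[m - s] q) := by
        rw [← Function.iterate_add_apply]
        congr 1
        omega
      set v : P := g^[m - s - 1] q with hvdef
      have hvA : v ∈ A i := hitmem _ q hqA
      have huv : g^[m - s] q = g v := by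
        rw [hvdef, ← Function.iterate_succ_apply' g (m - s - 1) q]
        congr 1
        omega
      set u : P := g v with hudef
      have huP : u ∈ Pset := ⟨v, hvA, rfl⟩
      have huA : u ∈ A i := hPsub huP
      have hvPQ : v ∈ Pset ∪ Q := by
        rcases Nat.eq_zero_or_pos (m - s - 1) with h0 | h0
        · right; rw [hvdef, h0]; simpa using hq
        · left
          obtain ⟨t, ht⟩ : ∃ t, m - s - 1 = t + 1 := ⟨m - s - 2, by omega⟩
          rw [hvdef, ht]
          exact hitP t q hqA
      have hvyb : δm ≤ dist v yb := by
        rcases hvPQ with h | h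
        · exact le_trans (min_le_left _ _) (hgapP v h yb hybA hybP)
        · exact le_trans (min_le_right _ _) (hgapQ v h yb hybA hybQ)
      obtain ⟨ρ, hρ, hss⟩ := hsand s
      have hxu : g^[m] q = g^[s] u := by rw [hxlev, huv]
      have h1 := hss u yb
      have h2 := hss u (g yb)
      have hcomm : g (g^[s] yb) = g^[s] (g yb) := by
        rw [← Function.iterate_succ_apply' g s yb, Function.iterate_succ_apply g s yb]
      rw [hcomm, hxu]
      have hd1 : δ1 ≤ dist u yb := hgapP u huP yb hybA hybP
      have hd2 : dist u yb ≤ B := hBb u huA yb hybA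
      have hgab := hga v yb
      have hd3 : La * δm ≤ dist u (g yb) :=
        le_trans (mul_le_mul_of_nonneg_left hvyb hLa.le) hgab.1
      have hd4 : dist u (g yb) ≤ B := hBb u huA (g yb) (hgmem yb hybA)
      constructor
      · have hub : dist (g^[s] u) (g^[s] yb) ≤ K * ρ * B :=
          le_trans h1.2 (mul_le_mul_of_nonneg_left hd2 (by positivity))
        calc c * dist (g^[s] u) (g^[s] yb) ≤ (La * δm / (K * B)) * (K * ρ * B) :=
              mul_le_mul hc2 hub dist_nonneg (by positivity)
          _ = ρ * (La * δm) := by field_simp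
          _ ≤ ρ * dist u (g yb) := mul_le_mul_of_nonneg_left hd3 hρ.le
          _ ≤ dist (g^[s] u) (g^[s] (g yb)) := h2.1
      · calc dist (g^[s] u) (g^[s] (g yb)) ≤ K * ρ * dist u (g yb) := h2.2
          _ ≤ K * ρ * B := mul_le_mul_of_nonneg_left hd4 (by positivity)
          _ = (K * B / δm) * (ρ * δm) := by field_simp
          _ ≤ (K * B / δm) * dist (g^[s] u) (g^[s] yb) := by
              have hdm : δm ≤ dist u yb := le_trans (min_le_left _ _) hd1
              have hlow : ρ * δm ≤ dist (g^[s] u) (g^[s] yb) :=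
                le_trans (mul_le_mul_of_nonneg_left hdm hρ.le) h1.1
              exact mul_le_mul_of_nonneg_left hlow (by positivity)
          _ ≤ C * dist (g^[s] u) (g^[s] yb) :=
              mul_le_mul_of_nonneg_right hC2 dist_nonneg
  -- the map
  refine ⟨fun x => if x ∈ W then x else g x, ⟨?_, ?_, ?_⟩, c, C, hc, hC, ?_⟩
  · -- MapsTo
    intro x hx
    by_cases hxW : x ∈ W
    · simp only [if_pos hxW]
      rcases hWPQ x hxW with h | h
      · exact Or.inl h
      · exact Or.inr h
    · simp only [if_neg hxW]
      exact Or.inl ⟨x, hx, rfl⟩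
  · -- InjOn
    intro x hx y hy hxy
    by_cases hxW : x ∈ W <;> by_cases hyW : y ∈ W
    · simpa only [if_pos hxW, if_pos hyW] using hxy
    · simp only [if_pos hxW, if_neg hyW] at hxy
      exfalso
      obtain ⟨m, q, hq, hmq⟩ := hWrep x hxW
      cases m with
      | zero =>
        have hqx : q = x := by simpa using hmq
        refine hdisj.ne_of_mem (a := x) (b := x) ?_ ?_ rfl
        · rw [hxy]; exact ⟨y, hy, rfl⟩
        · rw [← hqx]; exact hq
      | succ m =>
        have h3 : g (g^[m] q) = g y := by
          rw [← Function.iterate_succ_apply' g m q, hmq]; exact hxy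
        exact hyW (hginj h3 ▸ hWmem m q hq)
    · simp only [if_neg hxW, if_pos hyW] at hxy
      exfalso
      obtain ⟨m, q, hq, hmq⟩ := hWrep y hyW
      cases m with
      | zero =>
        have hqy : q = y := by simpa using hmq
        refine hdisj.ne_of_mem (a := y) (b := y) ?_ ?_ rfl
        · rw [← hxy]; exact ⟨x, hx, rfl⟩
        · rw [← hqy]; exact hq
      | succ m =>
        have h3 : g (g^[m] q) = g x := by
          rw [← Function.iterate_succ_apply' g m q, hmq]; exact hxy.symm
        exact hxW (hginj h3 ▸ hWmem m q hq)
    · simp only [if_neg hxW, if_neg hyW] at hxy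
      exact hginj hxy
  · -- SurjOn
    rintro z (hz | hz)
    · obtain ⟨w, hwA, rfl⟩ := hz
      by_cases hwW : w ∈ W
      · obtain ⟨m, q, hq, rfl⟩ := hWrep w hwW
        have hzW : g (g^[m] q) ∈ W := by
          rw [← Function.iterate_succ_apply' g m q]
          exact hWmem (m + 1) q hq
        exact ⟨g (g^[m] q), hWsub hzW, if_pos hzW⟩
      · exact ⟨w, hwA, if_neg hwW⟩
    · have hzW : z ∈ W := hQW hz
      exact ⟨z, hQsub hz, if_pos hzW⟩
  · -- the bi-Lipschitz bounds
    intro x hx y hy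
    by_cases hxW : x ∈ W <;> by_cases hyW : y ∈ W
    · simp only [if_pos hxW, if_pos hyW]
      constructor
      · exact mul_le_of_le_one_left dist_nonneg hc1
      · exact le_mul_of_one_le_left dist_nonneg hC1
    · simp only [if_pos hxW, if_neg hyW]
      exact key x hx y hy hxW hyW
    · simp only [if_neg hxW, if_pos hyW]
      have h := key y hy x hx hyW hxW
      rw [dist_comm x y, dist_comm (g x) y]
      exact h
    · simp only [if_neg hxW, if_neg hyW]
      have h := hga x y
      constructor
      · exact le_trans (mul_le_mul_of_nonneg_right hcLa dist_nonneg) h.1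
      · exact le_trans h.2 (mul_le_mul_of_nonneg_right hCRa dist_nonneg)


theorem isPathFrom_unique {src tgt : E → Fin n} {p : List E} :
    ∀ {i j j' : Fin n}, IsPathFrom src tgt i j p → IsPathFrom src tgt i j' p → j = j' := by
  induction p with
  | nil => intro i j j' h1 h2; exact (isPathFrom_nil.1 h1).symm.trans (isPathFrom_nil.1 h2)
  | cons e p ih =>
    intro i j j' h1 h2
    exact ih (isPathFrom_cons.1 h1).2 (isPathFrom_cons.1 h2).2

theorem list_prod_le_pow (hr0 : ∀ e, 0 < r e) {rm : ℝ} (hrm : 0 ≤ rm) (hre : ∀ e : E, r e ≤ rm) (p : List E) :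
    (p.map r).prod ≤ rm ^ p.length := by
  induction p with
  | nil => simp
  | cons e p ih =>
    simp only [List.map_cons, List.prod_cons, List.length_cons, pow_succ]
    rw [mul_comm (rm ^ p.length) rm]
    exact mul_le_mul (hre e) ih (le_of_lt (prodl_pos hr0 p)) hrm

theorem BLE_cyl (hl : ∀ e, 0 < l e) (hr : ∀ e, 0 < r e)
    (hS : ∀ e, ∀ x y : P, l e * dist x y ≤ dist (S e x) (S e y) ∧
      dist (S e x) (S e y) ≤ r e * dist x y) (p : List E) (X : Set P) :
    BLE X (pathMap S p '' X) :=
  ⟨pathMap S p, (pathMap_injective hl hr hS p).injOn.bijOn_image,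
    (p.map l).prod, (p.map r).prod, prodl_pos hl p, prodl_pos hr p,
    fun x _ y _ => pathMap_lip hl hr hS p x y⟩

theorem BLE_to_subtype {X Y : Set P} (h : BLE X Y) :
    ∃ Φ : X → Y, Function.Bijective Φ ∧ ∃ c C : ℝ, 0 < c ∧ c ≤ C ∧
      ∀ x x' : X, c * dist x x' ≤ dist (Φ x) (Φ x') ∧ dist (Φ x) (Φ x') ≤ C * dist x x' := by
  obtain ⟨f, hf, c, C, hc, _hC, hb⟩ := h
  refine ⟨fun x => ⟨f x, hf.mapsTo x.2⟩, ⟨?_, ?_⟩, c, max c C, hc, le_max_left _ _, ?_⟩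
  · intro x x' hxx
    have hfe : f x = f x' := congrArg Subtype.val hxx
    exact Subtype.ext (hf.injOn x.2 x'.2 hfe)
  · intro y
    obtain ⟨x, hx, hfx⟩ := hf.surjOn y.2
    exact ⟨⟨x, hx⟩, Subtype.ext hfx⟩
  · intro x x'
    have h := hb x x.2 x' x'.2
    constructor
    · rw [Subtype.dist_eq, Subtype.dist_eq]
      exact h.1
    · rw [Subtype.dist_eq, Subtype.dist_eq]
      exact le_trans h.2 (mul_le_mul_of_nonneg_right (le_max_right _ _) dist_nonneg)

theorem branching [Fintype E] (hl : ∀ e, 0 < l e) (hr : ∀ e, 0 < r e) (hr1 : ∀ e, r e < 1)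
    (hS : ∀ e, ∀ x y : P, l e * dist x y ≤ dist (S e x) (S e y) ∧
      dist (S e x) (S e y) ≤ r e * dist x y)
    (hAcp : ∀ i, IsCompact (A i))
    (hattr : ∀ i, A i = ⋃ (e : E) (_ : src e = i), S e '' A (tgt e))
    (hssc : ∀ e e' : E, src e = src e' → e ≠ e' →
      Disjoint (S e '' A (tgt e)) (S e' '' A (tgt e')))
    (hsc : ∀ i j : Fin n, ∃ p : List E, p ≠ [] ∧ IsPathFrom src tgt i j p)
    {i : Fin n} {x y : P} (hx : x ∈ A i) (hy : y ∈ A i) (hxy : x ≠ y)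
    (k k' : Fin n) :
    ∃ aa bb : List E, aa ≠ [] ∧ bb ≠ [] ∧
      IsPathFrom src tgt i k aa ∧ IsPathFrom src tgt i k' bb ∧
      Disjoint (pathMap S aa '' A k) (pathMap S bb '' A k') := by
  -- a uniform bound on all the pieces
  have hBf : ∀ j : Fin n, ∃ Bj : ℝ, ∀ u ∈ A j, ∀ v ∈ A j, dist u v ≤ Bj :=
    fun j => Metric.isBounded_iff.1 (hAcp j).isBounded
  choose Bf hBfs using hBf
  set B : ℝ := (∑ j : Fin n, |Bf j|) + 1 with hBdef
  have hBj : ∀ j : Fin n, Bf j ≤ B := by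
    intro j
    have h1 : |Bf j| ≤ ∑ j : Fin n, |Bf j| :=
      Finset.single_le_sum (f := fun j => |Bf j|) (fun _ _ => abs_nonneg _) (Finset.mem_univ j)
    calc Bf j ≤ |Bf j| := le_abs_self _
      _ ≤ ∑ j : Fin n, |Bf j| := h1
      _ ≤ B := by rw [hBdef]; linarith
  have hB0 : 0 ≤ B := by
    have := le_trans (abs_nonneg (Bf i))
      (Finset.single_le_sum (f := fun j => |Bf j|) (fun _ _ => abs_nonneg _) (Finset.mem_univ i))
    rw [hBdef]; linarith
  -- a uniform contraction ratio
  obtain ⟨p0, hp0ne, _⟩ := hsc i i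
  have hEne : Nonempty E := by
    cases p0 with
    | nil => exact absurd rfl hp0ne
    | cons e _ => exact ⟨e⟩
  obtain ⟨em, _, hem⟩ := Finset.exists_max_image (Finset.univ : Finset E) r
    ⟨hEne.some, Finset.mem_univ _⟩
  set rm : ℝ := r em with hrmdef
  have hrm0 : 0 < rm := hr em
  have hrm1 : rm < 1 := hr1 em
  have hrme : ∀ e : E, r e ≤ rm := fun e => hem e (Finset.mem_univ e)
  -- choose the depth
  have hd : 0 < dist x y := dist_pos.2 hxy
  obtain ⟨m, hm⟩ := exists_pow_lt_of_lt_one (div_pos hd (by linarith : (0:ℝ) < B + 1)) hrm1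
  have hmB : rm ^ m * (B + 1) < dist x y := by
    rw [lt_div_iff₀ (by linarith : (0:ℝ) < B + 1)] at hm
    linarith
  -- cylinders of depth m containing x and y
  obtain ⟨p, jp, hplen, hppath, hxp⟩ := exists_cylinder hattr m i x hx
  obtain ⟨q, jq, hqlen, hqpath, hyq⟩ := exists_cylinder hattr m i y hy
  have hpq : p ≠ q := by
    rintro rfl
    obtain ⟨u, hu, hux⟩ := hxp
    obtain ⟨v, hv, hvy⟩ := hyq
    obtain rfl : jp = jq := isPathFrom_unique hppath hqpath
    have hprod : (p.map r).prod ≤ rm ^ m := by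
      have := list_prod_le_pow hr hrm0.le hrme p
      rwa [hplen] at this
    have hlt : dist x y ≤ rm ^ m * (B + 1) := by
      rw [← hux, ← hvy]
      calc dist (pathMap S p u) (pathMap S p v) ≤ (p.map r).prod * dist u v :=
            (pathMap_lip hl hr hS p u v).2
        _ ≤ rm ^ m * (B + 1) := by
            apply mul_le_mul hprod _ dist_nonneg (by positivity)
            calc dist u v ≤ Bf jp := hBfs jp u hu v hv
              _ ≤ B := hBj jp
              _ ≤ B + 1 := by linarith
    linarith
  have hdisj0 := cylinders_disjoint hl hr hS hattr hssc (hplen.trans hqlen.symm) hpq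
    hppath hqpath
  obtain ⟨w1, hw1ne, hw1⟩ := hsc jp k
  obtain ⟨w2, hw2ne, hw2⟩ := hsc jq k'
  refine ⟨p ++ w1, q ++ w2, ?_, ?_, isPathFrom_append hppath hw1,
    isPathFrom_append hqpath hw2, ?_⟩
  · intro h; rcases List.append_eq_nil_iff.1 h with ⟨_, h2⟩; exact hw1ne h2
  · intro h; rcases List.append_eq_nil_iff.1 h with ⟨_, h2⟩; exact hw2ne h2
  · apply Set.disjoint_of_subset _ _ hdisj0
    · rw [pathMap_append, Set.image_comp]
      exact Set.image_mono (pathMap_mapsTo hattr hw1)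
    · rw [pathMap_append, Set.image_comp]
      exact Set.image_mono (pathMap_mapsTo hattr hw2)
end GDIFS


theorem attractor_components_biLipschitz_equivalent
    (d n : ℕ) (E : Type) [Fintype E] (src tgt : E → Fin n)
    (S : E → EuclideanSpace ℝ (Fin d) → EuclideanSpace ℝ (Fin d))
    (hout : ∀ i : Fin n, ∃ e : E, src e = i)
    -- each `S e` is a bi-Lipschitz contraction
    (l r : E → ℝ) (hl : ∀ e, l e ∈ Set.Ioo (0:ℝ) 1) (hr : ∀ e, r e ∈ Set.Ioo (0:ℝ) 1)
    (hS : ∀ e, ∀ x y, l e * dist x y ≤ dist (S e x) (S e y) ∧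
      dist (S e x) (S e y) ≤ r e * dist x y)
    -- strong connectivity
    (hsc : ∀ i j : Fin n, ∃ p : List E, p ≠ [] ∧ IsPathFrom src tgt i j p)
    -- the attractor
    (A : Fin n → Set (EuclideanSpace ℝ (Fin d)))
    (hAcp : ∀ i, IsCompact (A i)) (hAne : ∀ i, (A i).Nonempty)
    (hattr : ∀ i, A i = ⋃ (e : E) (_ : src e = i), S e '' A (tgt e))
    -- the strong separation condition
    (hssc : ∀ e e' : E, src e = src e' → e ≠ e' →
      Disjoint (S e '' A (tgt e)) (S e' '' A (tgt e')))
    -- the bounded distortion property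
    (K : ℝ) (hK : 0 < K)
    (hBDP : ∀ w : List E, w ≠ [] → (∃ i j, IsPathFrom src tgt i j w) →
      lipUpper (pathMap S w) ≤ K * lipLower (pathMap S w)) :
    ∀ i j : Fin n, ∃ Φ : (A i) → (A j), Function.Bijective Φ ∧
      ∃ c C : ℝ, 0 < c ∧ c ≤ C ∧
        ∀ x x' : A i, c * dist x x' ≤ dist (Φ x) (Φ x') ∧
          dist (Φ x) (Φ x') ≤ C * dist x x' := by
  intro i j
  classical
  by_cases hsub : ∀ t : Fin n, ∀ x ∈ A t, ∀ y ∈ A t, x = y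
  · obtain ⟨zj, hzj⟩ := hAne j
    refine ⟨fun _ => ⟨zj, hzj⟩, ⟨?_, ?_⟩, 1, 1, one_pos, le_rfl, ?_⟩
    · intro x x' _
      exact Subtype.ext (hsub i x.1 x.2 x'.1 x'.2)
    · intro y
      obtain ⟨zi, hzi⟩ := hAne i
      exact ⟨⟨zi, hzi⟩, Subtype.ext (hsub j zj hzj y.1 y.2)⟩
    · intro x x'
      have hxx : (x : EuclideanSpace ℝ (Fin d)) = (x' : EuclideanSpace ℝ (Fin d)) :=
        hsub i x.1 x.2 x'.1 x'.2
      have h0 : dist x x' = 0 := by rw [Subtype.dist_eq, hxx, dist_self]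
      constructor
      · rw [h0, mul_zero]
        exact dist_nonneg
      · show dist (⟨zj, hzj⟩ : A j) (⟨zj, hzj⟩ : A j) ≤ 1 * dist x x'
        rw [dist_self]
        positivity
  · push_neg at hsub
    obtain ⟨t0, x0, hx0, y0, hy0, hxy0⟩ := hsub
    have htwo : ∃ u v : EuclideanSpace ℝ (Fin d), u ≠ v := ⟨x0, y0, hxy0⟩
    have hl' : ∀ e, 0 < l e := fun e => (hl e).1
    have hr' : ∀ e, 0 < r e := fun e => (hr e).1
    have hr1 : ∀ e, r e < 1 := fun e => (hr e).2
    have htwoA : ∀ t : Fin n, ∃ u v : EuclideanSpace ℝ (Fin d),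
        u ∈ A t ∧ v ∈ A t ∧ u ≠ v := by
      intro t
      obtain ⟨w, hwne, hw⟩ := hsc t t0
      exact ⟨pathMap S w x0, pathMap S w y0, pathMap_mapsTo hattr hw ⟨x0, hx0, rfl⟩,
        pathMap_mapsTo hattr hw ⟨y0, hy0, rfl⟩,
        fun h => hxy0 (pathMap_injective hl' hr' hS w h)⟩
    obtain ⟨ui, vi, hui, hvi, huvi⟩ := htwoA i
    obtain ⟨uj, vj, huj, hvj, huvj⟩ := htwoA j
    obtain ⟨aa, bb, haane, hbbne, haa, hbb, hab⟩ :=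
      branching hl' hr' hr1 hS hAcp hattr hssc hsc hui hvi huvi i j
    obtain ⟨aa', bb', haane', hbbne', haa', hbb', hab'⟩ :=
      branching hl' hr' hr1 hS hAcp hattr hssc hsc huj hvj huvj j i
    have h1 : BLE (A i) (pathMap S aa '' A i ∪ pathMap S bb '' A j) :=
      absorb hl' hr' hS hAcp hattr hssc htwo hBDP haa haane hbb hab
    have h2 : BLE (A j) (pathMap S aa' '' A j ∪ pathMap S bb' '' A i) :=
      absorb hl' hr' hS hAcp hattr hssc htwo hBDP haa' haane' hbb' hab'
    have hcont : ∀ p : List E, Continuous (pathMap S p) :=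
      fun p => (pathMap_lipschitzWith hl' hr' hS p).continuous
    have hPc : IsCompact (pathMap S aa '' A i) := (hAcp i).image (hcont aa)
    have hQc : IsCompact (pathMap S bb '' A j) := (hAcp j).image (hcont bb)
    have hPc' : IsCompact (pathMap S aa' '' A j) := (hAcp j).image (hcont aa')
    have hQc' : IsCompact (pathMap S bb' '' A i) := (hAcp i).image (hcont bb')
    have e1 : BLE (A i) (pathMap S aa '' A i) := BLE_cyl hl' hr' hS aa (A i)
    have e2 : BLE (A j) (pathMap S bb '' A j) := BLE_cyl hl' hr' hS bb (A j)
    have e3 : BLE (A j) (pathMap S aa' '' A j) := BLE_cyl hl' hr' hS aa' (A j)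
    have e4 : BLE (A i) (pathMap S bb' '' A i) := BLE_cyl hl' hr' hS bb' (A i)
    have glue1 : BLE (pathMap S aa '' A i) (pathMap S bb' '' A i) := e1.symm.trans e4
    have glue2 : BLE (pathMap S bb '' A j) (pathMap S aa' '' A j) := e2.symm.trans e3
    have hglue : BLE (pathMap S aa '' A i ∪ pathMap S bb '' A j)
        (pathMap S bb' '' A i ∪ pathMap S aa' '' A j) :=
      BLE_glue hPc hQc hQc' hPc' hab hab'.symm glue1 glue2
    have hfinal : BLE (A i) (A j) := by
      refine (h1.trans hglue).trans ?_
      rw [Set.union_comm]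
      exact h2.symm
    exact BLE_to_subtype hfinal
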